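/- For every y > 0, ∫₀^y η^{−n₂−1} |u(I(η))| dη + ∫_y^∞ η^{−n₁−1} |u(I(η))| dη < ∞; in fact this sum is bounded above by −(1/n₂)y^{−n₂}|u(I(y))−yI(y)| + (1/n₁)y^{−n₁}|u(I(y))−yI(y)| + (1+1/n₁)∫_y^∞ η^{−n₁}I(η)dη + (1−1/n₂)∫₀^y η^{−n₂}I(η)dη. -/

import Mathlib

open MeasureTheory Set Filter

lemma stmt8_Isurj (I : ℝ → ℝ) (hI_cont : ContinuousOn I (Set.Ioi 0))
    (hI_zero : Filter.Tendsto I (nhdsWithin 0 (Set.Ioi 0)) Filter.atTop)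
    (hI_top : Filter.Tendsto I Filter.atTop (nhds 0))
    (c : ℝ) (hc : 0 < c) : ∃ z, 0 < z ∧ I z = c := by
  obtain ⟨a, ha, haI⟩ : ∃ a, 0 < a ∧ c < I a := by
    have h := hI_zero.eventually (Filter.eventually_gt_atTop c)
    rcases (h.and self_mem_nhdsWithin).exists with ⟨a, h1, h2⟩
    exact ⟨a, h2, h1⟩
  obtain ⟨b, hb, hbI⟩ : ∃ b, a < b ∧ I b < c := by
    have h := hI_top.eventually_lt_const hc
    rcases (h.and (Filter.eventually_gt_atTop a)).exists with ⟨b, h1, h2⟩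
    exact ⟨b, h2, h1⟩
  have hcont : ContinuousOn I (Set.Icc a b) :=
    hI_cont.mono (fun x hx => lt_of_lt_of_le ha hx.1)
  have := intermediate_value_Icc' (le_of_lt hb) hcont
  have hmem : c ∈ Set.Icc (I b) (I a) := ⟨le_of_lt hbI, le_of_lt haI⟩
  rcases this hmem with ⟨z, hz, hzI⟩
  exact ⟨z, lt_of_lt_of_le ha hz.1, hzI⟩

lemma stmt8_u'anti (u' I : ℝ → ℝ)
    (hI_left : ∀ y : ℝ, 0 < y → u' (I y) = y)
    (hI_anti : StrictAntiOn I (Set.Ioi 0))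
    (hI_cont : ContinuousOn I (Set.Ioi 0))
    (hI_zero : Filter.Tendsto I (nhdsWithin 0 (Set.Ioi 0)) Filter.atTop)
    (hI_top : Filter.Tendsto I Filter.atTop (nhds 0))
    {c₁ c₂ : ℝ} (h1 : 0 < c₁) (h12 : c₁ < c₂) : u' c₂ < u' c₁ := by
  obtain ⟨z₁, hz₁, hz₁I⟩ := stmt8_Isurj I hI_cont hI_zero hI_top c₁ h1
  obtain ⟨z₂, hz₂, hz₂I⟩ := stmt8_Isurj I hI_cont hI_zero hI_top c₂ (h1.trans h12)
  have e1 : u' c₁ = z₁ := by rw [← hz₁I]; exact hI_left z₁ hz₁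
  have e2 : u' c₂ = z₂ := by rw [← hz₂I]; exact hI_left z₂ hz₂
  rw [e1, e2]
  by_contra h
  push_neg at h
  rcases eq_or_lt_of_le h with heq | hlt
  · rw [heq, hz₂I] at hz₁I; exact (ne_of_lt h12) hz₁I.symm
  · have := hI_anti hz₁ hz₂ hlt
    rw [hz₁I, hz₂I] at this
    exact absurd h12 (not_lt.mpr (le_of_lt this))

lemma stmt8_grad (u u' I : ℝ → ℝ)
    (hu_cont : ContinuousOn u (Set.Ici 0))
    (hu_deriv : ∀ c : ℝ, 0 < c → HasDerivAt u (u' c) c)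
    (hI_left : ∀ y : ℝ, 0 < y → u' (I y) = y)
    (hI_anti : StrictAntiOn I (Set.Ioi 0))
    (hI_cont : ContinuousOn I (Set.Ioi 0))
    (hI_zero : Filter.Tendsto I (nhdsWithin 0 (Set.Ioi 0)) Filter.atTop)
    (hI_top : Filter.Tendsto I Filter.atTop (nhds 0))
    {a c : ℝ} (ha : 0 < a) (hc : 0 < c) : u c ≤ u a + u' a * (c - a) := by
  have anti : ∀ {x y : ℝ}, 0 < x → x < y → u' y < u' x :=
    fun hx hxy => stmt8_u'anti u' I hI_left hI_anti hI_cont hI_zero hI_top hx hxy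
  rcases lt_trichotomy a c with hac | hac | hac
  · obtain ⟨ξ, hξ, hξeq⟩ := exists_hasDerivAt_eq_slope u u' hac
      (hu_cont.mono (fun x hx => le_trans (le_of_lt ha) hx.1))
      (fun x hx => hu_deriv x (ha.trans hx.1))
    have h1 : u' ξ ≤ u' a := le_of_lt (anti ha hξ.1)
    have h2 : u c - u a = u' ξ * (c - a) := by
      rw [eq_div_iff (sub_ne_zero.mpr (ne_of_gt hac))] at hξeq; linarith [hξeq]
    nlinarith [sub_pos.mpr hac]
  · rw [hac]; simp
  · obtain ⟨ξ, hξ, hξeq⟩ := exists_hasDerivAt_eq_slope u u' hac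
      (hu_cont.mono (fun x hx => le_trans (le_of_lt hc) hx.1))
      (fun x hx => hu_deriv x (hc.trans hx.1))
    have h1 : u' a ≤ u' ξ := le_of_lt (anti (hc.trans hξ.1) hξ.2)
    have h2 : u a - u c = u' ξ * (a - c) := by
      rw [eq_div_iff (sub_ne_zero.mpr (ne_of_gt hac))] at hξeq; linarith [hξeq]
    nlinarith [sub_pos.mpr hac]

section core
variable (u u' I : ℝ → ℝ)
    (hu_cont : ContinuousOn u (Set.Ici 0))
    (hu_deriv : ∀ c : ℝ, 0 < c → HasDerivAt u (u' c) c)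
    (hI_pos : ∀ y : ℝ, 0 < y → 0 < I y)
    (hI_left : ∀ y : ℝ, 0 < y → u' (I y) = y)
    (hI_anti : StrictAntiOn I (Set.Ioi 0))
    (hI_cont : ContinuousOn I (Set.Ioi 0))
    (hI_zero : Filter.Tendsto I (nhdsWithin 0 (Set.Ioi 0)) Filter.atTop)
    (hI_top : Filter.Tendsto I Filter.atTop (nhds 0))

include hu_cont hu_deriv hI_pos hI_left hI_anti hI_cont hI_zero hI_top in
lemma stmt8_max {z w : ℝ} (hz : 0 < z) (hw : 0 < w) :
    u (I z) - w * I z ≤ u (I w) - w * I w := by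
  have h := stmt8_grad u u' I hu_cont hu_deriv hI_left hI_anti hI_cont hI_zero hI_top
    (hI_pos w hw) (hI_pos z hz)
  rw [hI_left w hw] at h
  linarith

include hu_cont hu_deriv hI_pos hI_left hI_anti hI_cont hI_zero hI_top in
lemma stmt8_fderiv {z : ℝ} (hz : 0 < z) :
    HasDerivAt (fun t => u (I t) - t * I t) (-(I z)) z := by
  set f : ℝ → ℝ := fun t => u (I t) - t * I t with hf
  rw [hasDerivAt_iff_tendsto_slope, tendsto_iff_dist_tendsto_zero]
  have hIz : ContinuousAt I z := hI_cont.continuousAt (Ioi_mem_nhds hz)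
  have hb : Filter.Tendsto (fun w => |I w - I z|) (nhdsWithin z {z}ᶜ) (nhds 0) := by
    have : Filter.Tendsto (fun w => |I w - I z|) (nhds z) (nhds |I z - I z|) :=
      ((hIz.tendsto.sub tendsto_const_nhds).abs)
    simpa using this.mono_left nhdsWithin_le_nhds
  have hev : ∀ᶠ w in nhdsWithin z {z}ᶜ, dist (slope f z w) (-(I z)) ≤ |I w - I z| := by
    have hpos : ∀ᶠ w in nhdsWithin z {z}ᶜ, (0:ℝ) < w :=
      eventually_nhdsWithin_of_eventually_nhds (eventually_gt_nhds hz)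
    filter_upwards [hpos, self_mem_nhdsWithin] with w hw hwne
    have hwz : w - z ≠ 0 := sub_ne_zero.mpr hwne
    have key1 : f z - (w - z) * I z ≤ f w := by
      have := stmt8_max u u' I hu_cont hu_deriv hI_pos hI_left hI_anti hI_cont hI_zero
        hI_top hz hw
      simp only [hf]; linarith
    have key2 : f w ≤ f z - (w - z) * I w := by
      have := stmt8_max u u' I hu_cont hu_deriv hI_pos hI_left hI_anti hI_cont hI_zero
        hI_top hw hz
      simp only [hf]; linarith
    have hslope : slope f z w = (f w - f z) / (w - z) := by
      rw [slope_def_field]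
    have hN0 : 0 ≤ f w - f z + (w - z) * I z := by linarith
    have hN1 : f w - f z + (w - z) * I z ≤ (w - z) * (I z - I w) := by linarith
    have habs : (w - z) * (I z - I w) ≤ |w - z| * |I w - I z| := by
      calc (w - z) * (I z - I w) ≤ |(w - z) * (I z - I w)| := le_abs_self _
        _ = |w - z| * |I w - I z| := by rw [abs_mul, abs_sub_comm (I z)]
    have hdist : dist (slope f z w) (-(I z)) =
        (f w - f z + (w - z) * I z) / |w - z| := by
      rw [Real.dist_eq, hslope, sub_neg_eq_add]
      have heq : (f w - f z) / (w - z) + I z = (f w - f z + (w - z) * I z) / (w - z) := by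
        field_simp
      rw [heq, abs_div, abs_of_nonneg hN0]
    rw [hdist, div_le_iff₀ (abs_pos.mpr hwz)]
    calc f w - f z + (w - z) * I z ≤ (w - z) * (I z - I w) := hN1
      _ ≤ |w - z| * |I w - I z| := habs
      _ = |I w - I z| * |w - z| := mul_comm _ _
  exact squeeze_zero' (Filter.Eventually.of_forall fun _ => dist_nonneg) hev hb
end core

open MeasureTheory

theorem stmt_8
    (δ r θ n₁ n₂ : ℝ)
    (hδ : 0 < δ) (hr : 0 < r) (hθ : θ ≠ 0)
    (hn₂0 : n₂ < 0) (hn₁1 : 1 < n₁)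
    (hroot₁ : θ ^ 2 / 2 * n₁ ^ 2 + (δ - r - θ ^ 2 / 2) * n₁ - δ = 0)
    (hroot₂ : θ ^ 2 / 2 * n₂ ^ 2 + (δ - r - θ ^ 2 / 2) * n₂ - δ = 0)
    (u u' I utld : ℝ → ℝ)
    (hu_mono : StrictMonoOn u (Set.Ici 0))
    (hu_conc : StrictConcaveOn ℝ (Set.Ici 0) u)
    (hu_cont : ContinuousOn u (Set.Ici 0))
    (hu_deriv : ∀ c : ℝ, 0 < c → HasDerivAt u (u' c) c)
    (hu'_cont : ContinuousOn u' (Set.Ioi 0))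
    (hu'_top : Filter.Tendsto u' Filter.atTop (nhds 0))
    (hu'_zero : Filter.Tendsto u' (nhdsWithin 0 (Set.Ioi 0)) Filter.atTop)
    (hI_pos : ∀ y : ℝ, 0 < y → 0 < I y)
    (hI_left : ∀ y : ℝ, 0 < y → u' (I y) = y)
    (hI_right : ∀ c : ℝ, 0 < c → I (u' c) = c)
    (hI_anti : StrictAntiOn I (Set.Ioi 0))
    (hI_cont : ContinuousOn I (Set.Ioi 0))
    (hI_zero : Filter.Tendsto I (nhdsWithin 0 (Set.Ioi 0)) Filter.atTop)
    (hI_top : Filter.Tendsto I Filter.atTop (nhds 0))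
    (hutld : ∀ y : ℝ, 0 < y → utld y = u (I y) - y * I y)
    (hI_int : ∀ y : ℝ, 0 < y →
      MeasureTheory.IntegrableOn (fun η => η ^ (-n₂) * I η) (Set.Ioo 0 y) MeasureTheory.volume)
    :
    ∀ y : ℝ, 0 < y →
      MeasureTheory.IntegrableOn (fun η => η ^ (-n₂ - 1) * |u (I η)|) (Set.Ioo 0 y)
        MeasureTheory.volume ∧
      MeasureTheory.IntegrableOn (fun η => η ^ (-n₁ - 1) * |u (I η)|) (Set.Ioi y)
        MeasureTheory.volume ∧
      (∫ η in Set.Ioo 0 y, η ^ (-n₂ - 1) * |u (I η)|) +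
        (∫ η in Set.Ioi y, η ^ (-n₁ - 1) * |u (I η)|) ≤
        -(1 / n₂) * y ^ (-n₂) * |u (I y) - y * I y| +
          (1 / n₁) * y ^ (-n₁) * |u (I y) - y * I y| +
          (1 + 1 / n₁) * (∫ η in Set.Ioi y, η ^ (-n₁) * I η) +
          (1 - 1 / n₂) * (∫ η in Set.Ioo 0 y, η ^ (-n₂) * I η) := by
  intro y hy
  have hn₁0 : (0:ℝ) < n₁ := lt_trans one_pos hn₁1
  set f : ℝ → ℝ := fun t => u (I t) - t * I t with hfdef
  -- basic facts about f
  have hfderiv : ∀ z : ℝ, 0 < z → HasDerivAt f (-(I z)) z := fun z hz =>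
    stmt8_fderiv u u' I hu_cont hu_deriv hI_pos hI_left hI_anti hI_cont hI_zero hI_top hz
  have hfmax : ∀ z w : ℝ, 0 < z → 0 < w → u (I z) - w * I z ≤ f w := fun z w hz hw =>
    stmt8_max u u' I hu_cont hu_deriv hI_pos hI_left hI_anti hI_cont hI_zero hI_top hz hw
  have hfanti : ∀ z w : ℝ, 0 < z → z ≤ w → f w ≤ f z := by
    intro z w hz hzw
    have h1 := hfmax w z (hz.trans_le hzw) hz
    have h1' : u (I w) - z * I w ≤ u (I z) - z * I z := h1
    have h2 : 0 ≤ (w - z) * I w := mul_nonneg (by linarith) (le_of_lt (hI_pos w (hz.trans_le hzw)))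
    have h2' : z * I w ≤ w * I w := by nlinarith [h2]
    simp only [hfdef]
    linarith
  have hfcont : ContinuousOn f (Set.Ioi 0) := fun x hx =>
    ((hfderiv x hx).continuousAt).continuousWithinAt
  -- continuity of the integrands
  have habs_cont : ContinuousOn (fun η => |u (I η)|) (Set.Ioi 0) := by
    have : ContinuousOn (fun η => u (I η)) (Set.Ioi 0) :=
      hu_cont.comp hI_cont (fun x hx => le_of_lt (hI_pos x hx))
    exact this.abs
  have hrpow_cont : ∀ p : ℝ, ContinuousOn (fun η : ℝ => η ^ p) (Set.Ioi 0) := by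
    intro p
    exact continuousOn_id.rpow_const (fun x hx => Or.inl (ne_of_gt hx))
  -- pointwise bound on (0, y]
  have hpt₂ : ∀ η ∈ Set.Ioc (0:ℝ) y, η ^ (-n₂ - 1) * |u (I η)| ≤
      η ^ (-n₂ - 1) * |f y| + η ^ (-n₂ - 1) * (f η - f y) + η ^ (-n₂) * I η := by
    intro η hη
    have hη0 : 0 < η := hη.1
    have hfy_le : f y ≤ f η := hfanti η y hη0 hη.2
    have hIη := hI_pos η hη0
    have habs : |u (I η)| ≤ |f y| + (f η - f y) + η * I η := by
      have he : u (I η) = f η + η * I η := by simp only [hfdef]; ring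
      calc |u (I η)| = |f η + η * I η| := by rw [he]
        _ ≤ |f η| + |η * I η| := abs_add_le _ _
        _ ≤ (|f y| + |f η - f y|) + η * I η := by
            have h1 : |f η| ≤ |f y| + |f η - f y| := by
              calc |f η| = |f y + (f η - f y)| := by ring_nf
                _ ≤ |f y| + |f η - f y| := abs_add_le _ _
            have h2 : |η * I η| = η * I η := abs_of_nonneg (by positivity)
            linarith
        _ = |f y| + (f η - f y) + η * I η := by
            rw [abs_of_nonneg (by linarith : (0:ℝ) ≤ f η - f y)]
    have hpow : η ^ (-n₂ - 1) * η = η ^ (-n₂) := by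
      have := (Real.rpow_add hη0 (-n₂ - 1) 1).symm
      rw [Real.rpow_one] at this
      rw [this]; norm_num
    have h0 : (0:ℝ) ≤ η ^ (-n₂ - 1) := Real.rpow_nonneg hη0.le _
    calc η ^ (-n₂ - 1) * |u (I η)| ≤ η ^ (-n₂ - 1) * (|f y| + (f η - f y) + η * I η) :=
          mul_le_mul_of_nonneg_left habs h0
      _ = η ^ (-n₂ - 1) * |f y| + η ^ (-n₂ - 1) * (f η - f y) + (η ^ (-n₂ - 1) * η) * I η := by
          ring
      _ = η ^ (-n₂ - 1) * |f y| + η ^ (-n₂ - 1) * (f η - f y) + η ^ (-n₂) * I η := by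
          rw [hpow]
  -- pointwise bound on [y, ∞)
  have hpt₁ : ∀ η ∈ Set.Ioi y, η ^ (-n₁ - 1) * |u (I η)| ≤
      η ^ (-n₁ - 1) * |f y| + η ^ (-n₁ - 1) * (f y - f η) + η ^ (-n₁) * I η := by
    intro η hη
    have hη0 : 0 < η := hy.trans hη
    have hfy_ge : f η ≤ f y := hfanti y η hy (le_of_lt hη)
    have hIη := hI_pos η hη0
    have habs : |u (I η)| ≤ |f y| + (f y - f η) + η * I η := by
      have he : u (I η) = f η + η * I η := by simp only [hfdef]; ring
      calc |u (I η)| = |f η + η * I η| := by rw [he]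
        _ ≤ |f η| + |η * I η| := abs_add_le _ _
        _ ≤ (|f y| + |f η - f y|) + η * I η := by
            have h1 : |f η| ≤ |f y| + |f η - f y| := by
              calc |f η| = |f y + (f η - f y)| := by ring_nf
                _ ≤ |f y| + |f η - f y| := abs_add_le _ _
            have h2 : |η * I η| = η * I η := abs_of_nonneg (by positivity)
            linarith
        _ = |f y| + (f y - f η) + η * I η := by
            rw [abs_sub_comm (f η) (f y), abs_of_nonneg (by linarith : (0:ℝ) ≤ f y - f η)]
    have hpow : η ^ (-n₁ - 1) * η = η ^ (-n₁) := by
      have := (Real.rpow_add hη0 (-n₁ - 1) 1).symm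
      rw [Real.rpow_one] at this
      rw [this]; norm_num
    have h0 : (0:ℝ) ≤ η ^ (-n₁ - 1) := Real.rpow_nonneg hη0.le _
    calc η ^ (-n₁ - 1) * |u (I η)| ≤ η ^ (-n₁ - 1) * (|f y| + (f y - f η) + η * I η) :=
          mul_le_mul_of_nonneg_left habs h0
      _ = η ^ (-n₁ - 1) * |f y| + η ^ (-n₁ - 1) * (f y - f η) + (η ^ (-n₁ - 1) * η) * I η := by
          ring
      _ = η ^ (-n₁ - 1) * |f y| + η ^ (-n₁ - 1) * (f y - f η) + η ^ (-n₁) * I η := by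
          rw [hpow]
  set A : ℝ := ∫ η in Set.Ioo 0 y, η ^ (-n₂) * I η with hA
  set B : ℝ := ∫ η in Set.Ioi y, η ^ (-n₁) * I η with hB
  have hBint : MeasureTheory.IntegrableOn (fun η => η ^ (-n₁) * I η) (Set.Ioi y) := by
    have hsub : Set.Ioi y ⊆ Set.Ioi (0:ℝ) := fun x hx => hy.trans hx
    have hmeas : MeasureTheory.AEStronglyMeasurable (fun η => η ^ (-n₁) * I η)
        (MeasureTheory.volume.restrict (Set.Ioi y)) :=
      (((hrpow_cont (-n₁)).mono hsub).mul (hI_cont.mono hsub)).aestronglyMeasurable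
        measurableSet_Ioi
    have hdom : MeasureTheory.IntegrableOn (fun η => I y * η ^ (-n₁)) (Set.Ioi y) :=
      (integrableOn_Ioi_rpow_of_lt (by linarith : -n₁ < -1) hy).const_mul (I y)
    apply MeasureTheory.Integrable.mono hdom hmeas
    rw [MeasureTheory.ae_restrict_iff' measurableSet_Ioi]
    apply MeasureTheory.ae_of_all
    intro x hx
    have hx0 : 0 < x := hy.trans hx
    have hIx : I x ≤ I y := le_of_lt (hI_anti (Set.mem_Ioi.mpr hy) (Set.mem_Ioi.mpr hx0) hx)
    have h1 : (0:ℝ) ≤ x ^ (-n₁) := Real.rpow_nonneg hx0.le _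
    rw [Real.norm_eq_abs, Real.norm_eq_abs,
      abs_of_nonneg (mul_nonneg h1 (hI_pos x hx0).le),
      abs_of_nonneg (mul_nonneg (hI_pos y hy).le h1)]
    calc x ^ (-n₁) * I x ≤ x ^ (-n₁) * I y := mul_le_mul_of_nonneg_left hIx h1
      _ = I y * x ^ (-n₁) := mul_comm _ _
  -- local integrability on compact subintervals
  have hloc : ∀ p : ℝ, ∀ a b : ℝ, 0 < a →
      MeasureTheory.IntegrableOn (fun η => η ^ p * |u (I η)|) (Set.Ioc a b) := by
    intro p a b ha
    rcases le_or_gt b a with hba | hab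
    · rw [Set.Ioc_eq_empty (not_lt.mpr hba)]; exact integrableOn_empty
    · have hsub : Set.Icc a b ⊆ Set.Ioi 0 := fun x hx => lt_of_lt_of_le ha hx.1
      have : ContinuousOn (fun η => η ^ p * |u (I η)|) (Set.Icc a b) :=
        ((hrpow_cont p).mono hsub).mul (habs_cont.mono hsub)
      exact this.integrableOn_Icc.mono_set Set.Ioc_subset_Icc_self
  -- bound for the truncated left integral
  have hbound₂ : ∀ ε : ℝ, 0 < ε → ε < y →
      (∫ η in Set.Ioc ε y, η ^ (-n₂ - 1) * |u (I η)|) ≤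
        -(1 / n₂) * y ^ (-n₂) * |f y| + (1 - 1/n₂) * A := by
    intro ε hε hεy
    have hεy' : ε ≤ y := le_of_lt hεy
    have hsub : Set.Icc ε y ⊆ Set.Ioi (0:ℝ) := fun x hx => lt_of_lt_of_le hε hx.1
    have hc1 : ContinuousOn (fun η : ℝ => η ^ (-n₂ - 1) * |f y|) (Set.Icc ε y) :=
      ((hrpow_cont _).mono hsub).mul continuousOn_const
    have hc2 : ContinuousOn (fun η : ℝ => η ^ (-n₂ - 1) * (f η - f y)) (Set.Icc ε y) :=
      ((hrpow_cont _).mono hsub).mul ((hfcont.mono hsub).sub continuousOn_const)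
    have hc3 : ContinuousOn (fun η : ℝ => η ^ (-n₂) * I η) (Set.Icc ε y) :=
      ((hrpow_cont _).mono hsub).mul (hI_cont.mono hsub)
    have hi1 : MeasureTheory.IntegrableOn (fun η : ℝ => η ^ (-n₂ - 1) * |f y|)
        (Set.Ioc ε y) MeasureTheory.volume :=
      hc1.integrableOn_Icc.mono_set Set.Ioc_subset_Icc_self
    have hi2 : MeasureTheory.IntegrableOn (fun η : ℝ => η ^ (-n₂ - 1) * (f η - f y))
        (Set.Ioc ε y) MeasureTheory.volume :=
      hc2.integrableOn_Icc.mono_set Set.Ioc_subset_Icc_self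
    have hi3 : MeasureTheory.IntegrableOn (fun η : ℝ => η ^ (-n₂) * I η)
        (Set.Ioc ε y) MeasureTheory.volume :=
      hc3.integrableOn_Icc.mono_set Set.Ioc_subset_Icc_self
    -- step 1 : pointwise comparison
    have step1 : (∫ η in Set.Ioc ε y, η ^ (-n₂ - 1) * |u (I η)|) ≤
        ∫ η in Set.Ioc ε y, (η ^ (-n₂ - 1) * |f y| + η ^ (-n₂ - 1) * (f η - f y) +
          η ^ (-n₂) * I η) := by
      have hi12 : MeasureTheory.IntegrableOn (fun η : ℝ => η ^ (-n₂ - 1) * |f y| +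
          η ^ (-n₂ - 1) * (f η - f y)) (Set.Ioc ε y) MeasureTheory.volume := hi1.add hi2
      apply MeasureTheory.setIntegral_mono_on (hloc _ ε y hε) (hi12.add hi3)
        measurableSet_Ioc
      intro x hx
      exact hpt₂ x ⟨hε.trans hx.1, hx.2⟩
    have step2 : (∫ η in Set.Ioc ε y, (η ^ (-n₂ - 1) * |f y| + η ^ (-n₂ - 1) * (f η - f y) +
          η ^ (-n₂) * I η)) =
        (∫ η in Set.Ioc ε y, η ^ (-n₂ - 1) * |f y|) +
        (∫ η in Set.Ioc ε y, η ^ (-n₂ - 1) * (f η - f y)) +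
        (∫ η in Set.Ioc ε y, η ^ (-n₂) * I η) := by
      have hi12 : MeasureTheory.IntegrableOn (fun η : ℝ => η ^ (-n₂ - 1) * |f y| +
          η ^ (-n₂ - 1) * (f η - f y)) (Set.Ioc ε y) MeasureTheory.volume := hi1.add hi2
      rw [MeasureTheory.integral_add hi12 hi3, MeasureTheory.integral_add hi1 hi2]
    -- term 1
    have e1 : (∫ η in Set.Ioc ε y, η ^ (-n₂ - 1) * |f y|) ≤ -(1/n₂) * y ^ (-n₂) * |f y| := by
      rw [MeasureTheory.integral_mul_const]
      have hval : (∫ η in Set.Ioc ε y, η ^ (-n₂ - 1)) = (y ^ (-n₂) - ε ^ (-n₂)) / (-n₂) := by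
        rw [← intervalIntegral.integral_of_le hεy',
          integral_rpow (Or.inl (by linarith : (-1:ℝ) < -n₂ - 1))]
        norm_num
      rw [hval]
      have h1 : (y ^ (-n₂) - ε ^ (-n₂)) / (-n₂) ≤ y ^ (-n₂) / (-n₂) := by
        apply div_le_div_of_nonneg_right ?_ (by linarith) |>.trans_eq rfl
        · have := Real.rpow_nonneg hε.le (-n₂); linarith
      calc (y ^ (-n₂) - ε ^ (-n₂)) / (-n₂) * |f y| ≤ y ^ (-n₂) / (-n₂) * |f y| :=
            mul_le_mul_of_nonneg_right h1 (abs_nonneg _)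
        _ = -(1/n₂) * y ^ (-n₂) * |f y| := by ring
    -- term 3
    have e3 : (∫ η in Set.Ioc ε y, η ^ (-n₂) * I η) ≤ A := by
      rw [MeasureTheory.integral_Ioc_eq_integral_Ioo]
      apply MeasureTheory.setIntegral_mono_set (hI_int y hy)
      · filter_upwards [MeasureTheory.ae_restrict_mem measurableSet_Ioo] with x hx
        exact mul_nonneg (Real.rpow_nonneg hx.1.le _) (hI_pos x hx.1).le
      · exact (Set.Ioo_subset_Ioo_left hε.le).eventuallyLE
    -- term 2 : integration by parts / FTC
    have e2 : (∫ η in Set.Ioc ε y, η ^ (-n₂ - 1) * (f η - f y)) ≤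
        -(1/n₂) * ∫ η in Set.Ioc ε y, η ^ (-n₂) * I η := by
      set F : ℝ → ℝ := fun η => -(1/n₂) * (η ^ (-n₂) * (f η - f y)) with hF
      have hFd : ∀ η ∈ Set.uIcc ε y, HasDerivAt F
          (η ^ (-n₂ - 1) * (f η - f y) + (1/n₂) * (η ^ (-n₂) * I η)) η := by
        intro η hη
        rw [Set.uIcc_of_le hεy'] at hη
        have hη0 : 0 < η := lt_of_lt_of_le hε hη.1
        have h1 : HasDerivAt (fun x : ℝ => x ^ (-n₂)) (-n₂ * η ^ (-n₂ - 1)) η :=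
          Real.hasDerivAt_rpow_const (Or.inl (ne_of_gt hη0))
        have h2 : HasDerivAt (fun x => f x - f y) (-(I η)) η := (hfderiv η hη0).sub_const _
        have h3 := (h1.mul h2).const_mul (-(1/n₂))
        have hn₂ne : n₂ ≠ 0 := ne_of_lt hn₂0
        refine h3.congr_deriv ?_
        field_simp
        ring
      have hcd : ContinuousOn (fun η : ℝ => η ^ (-n₂ - 1) * (f η - f y) +
          (1/n₂) * (η ^ (-n₂) * I η)) (Set.Icc ε y) :=
        hc2.add (continuousOn_const.mul hc3)
      have hFint : IntervalIntegrable (fun η : ℝ => η ^ (-n₂ - 1) * (f η - f y) +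
          (1/n₂) * (η ^ (-n₂) * I η)) MeasureTheory.volume ε y := by
        apply ContinuousOn.intervalIntegrable
        rwa [Set.uIcc_of_le hεy']
      have hFTC := intervalIntegral.integral_eq_sub_of_hasDerivAt hFd hFint
      have hsplit : (∫ η in ε..y, (η ^ (-n₂ - 1) * (f η - f y) +
            (1/n₂) * (η ^ (-n₂) * I η))) =
          (∫ η in ε..y, η ^ (-n₂ - 1) * (f η - f y)) +
          (1/n₂) * ∫ η in ε..y, η ^ (-n₂) * I η := by
        rw [intervalIntegral.integral_add, intervalIntegral.integral_const_mul]
        · apply ContinuousOn.intervalIntegrable; rwa [Set.uIcc_of_le hεy']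
        · apply ContinuousOn.intervalIntegrable
          rw [Set.uIcc_of_le hεy']
          exact continuousOn_const.mul hc3
      have hFy : F y = 0 := by simp [hF]
      have hFε : 0 ≤ F ε := by
        apply mul_nonneg (neg_pos.mpr (one_div_neg.mpr hn₂0)).le
        exact mul_nonneg (Real.rpow_nonneg hε.le _) (by linarith [hfanti ε y hε hεy'])
      rw [hsplit, hFy] at hFTC
      have key : (∫ η in ε..y, η ^ (-n₂ - 1) * (f η - f y)) ≤
          -(1/n₂) * ∫ η in ε..y, η ^ (-n₂) * I η := by linarith
      rwa [intervalIntegral.integral_of_le hεy', intervalIntegral.integral_of_le hεy'] at key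
    have e2' : -(1/n₂) * (∫ η in Set.Ioc ε y, η ^ (-n₂) * I η) ≤ -(1/n₂) * A :=
      mul_le_mul_of_nonneg_left e3 (neg_pos.mpr (one_div_neg.mpr hn₂0)).le
    calc (∫ η in Set.Ioc ε y, η ^ (-n₂ - 1) * |u (I η)|) ≤ _ := step1
      _ = _ := step2
      _ ≤ -(1/n₂) * y ^ (-n₂) * |f y| + (-(1/n₂) * A) + A := by
          have := e2.trans e2'
          linarith
      _ = -(1/n₂) * y ^ (-n₂) * |f y| + (1 - 1/n₂) * A := by ring
  -- bound for the truncated right integral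
  have hbound₁ : ∀ R : ℝ, y ≤ R →
      (∫ η in Set.Ioc y R, η ^ (-n₁ - 1) * |u (I η)|) ≤
        (1 / n₁) * y ^ (-n₁) * |f y| + (1 + 1/n₁) * B := by
    intro R hR
    have hsub : Set.Icc y R ⊆ Set.Ioi (0:ℝ) := fun x hx => lt_of_lt_of_le hy hx.1
    have hc1 : ContinuousOn (fun η : ℝ => η ^ (-n₁ - 1) * |f y|) (Set.Icc y R) :=
      ((hrpow_cont _).mono hsub).mul continuousOn_const
    have hc2 : ContinuousOn (fun η : ℝ => η ^ (-n₁ - 1) * (f y - f η)) (Set.Icc y R) :=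
      ((hrpow_cont _).mono hsub).mul (continuousOn_const.sub (hfcont.mono hsub))
    have hc3 : ContinuousOn (fun η : ℝ => η ^ (-n₁) * I η) (Set.Icc y R) :=
      ((hrpow_cont _).mono hsub).mul (hI_cont.mono hsub)
    have hi1 : MeasureTheory.IntegrableOn (fun η : ℝ => η ^ (-n₁ - 1) * |f y|)
        (Set.Ioc y R) MeasureTheory.volume :=
      hc1.integrableOn_Icc.mono_set Set.Ioc_subset_Icc_self
    have hi2 : MeasureTheory.IntegrableOn (fun η : ℝ => η ^ (-n₁ - 1) * (f y - f η))
        (Set.Ioc y R) MeasureTheory.volume :=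
      hc2.integrableOn_Icc.mono_set Set.Ioc_subset_Icc_self
    have hi3 : MeasureTheory.IntegrableOn (fun η : ℝ => η ^ (-n₁) * I η)
        (Set.Ioc y R) MeasureTheory.volume :=
      hc3.integrableOn_Icc.mono_set Set.Ioc_subset_Icc_self
    have step1 : (∫ η in Set.Ioc y R, η ^ (-n₁ - 1) * |u (I η)|) ≤
        ∫ η in Set.Ioc y R, (η ^ (-n₁ - 1) * |f y| + η ^ (-n₁ - 1) * (f y - f η) +
          η ^ (-n₁) * I η) := by
      have hi12 : MeasureTheory.IntegrableOn (fun η : ℝ => η ^ (-n₁ - 1) * |f y| +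
          η ^ (-n₁ - 1) * (f y - f η)) (Set.Ioc y R) MeasureTheory.volume := hi1.add hi2
      apply MeasureTheory.setIntegral_mono_on (hloc _ y R hy) (hi12.add hi3)
        measurableSet_Ioc
      intro x hx
      exact hpt₁ x hx.1
    have step2 : (∫ η in Set.Ioc y R, (η ^ (-n₁ - 1) * |f y| + η ^ (-n₁ - 1) * (f y - f η) +
          η ^ (-n₁) * I η)) =
        (∫ η in Set.Ioc y R, η ^ (-n₁ - 1) * |f y|) +
        (∫ η in Set.Ioc y R, η ^ (-n₁ - 1) * (f y - f η)) +
        (∫ η in Set.Ioc y R, η ^ (-n₁) * I η) := by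
      have hi12 : MeasureTheory.IntegrableOn (fun η : ℝ => η ^ (-n₁ - 1) * |f y| +
          η ^ (-n₁ - 1) * (f y - f η)) (Set.Ioc y R) MeasureTheory.volume := hi1.add hi2
      rw [MeasureTheory.integral_add hi12 hi3, MeasureTheory.integral_add hi1 hi2]
    have hzero : (0:ℝ) ∉ Set.uIcc y R := by
      rw [Set.uIcc_of_le hR]
      intro h
      exact absurd h.1 (not_le.mpr hy)
    have e1 : (∫ η in Set.Ioc y R, η ^ (-n₁ - 1) * |f y|) ≤ (1/n₁) * y ^ (-n₁) * |f y| := by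
      rw [MeasureTheory.integral_mul_const]
      have hval : (∫ η in Set.Ioc y R, η ^ (-n₁ - 1)) = (R ^ (-n₁) - y ^ (-n₁)) / (-n₁) := by
        rw [← intervalIntegral.integral_of_le hR,
          integral_rpow (Or.inr ⟨by intro h; linarith [h] , hzero⟩)]
        norm_num
      rw [hval]
      have h1 : (R ^ (-n₁) - y ^ (-n₁)) / (-n₁) ≤ y ^ (-n₁) / n₁ := by
        have hn₁ne : n₁ ≠ 0 := ne_of_gt hn₁0
        have h2 : (0:ℝ) ≤ R ^ (-n₁) := Real.rpow_nonneg (hy.trans_le hR).le _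
        have heq : (R ^ (-n₁) - y ^ (-n₁)) / (-n₁) = (y ^ (-n₁) - R ^ (-n₁)) / n₁ := by
          rw [div_eq_div_iff (by linarith : (-n₁:ℝ) ≠ 0) hn₁ne]
          ring
        rw [heq]
        apply div_le_div_of_nonneg_right ?_ hn₁0.le |>.trans_eq rfl
        · linarith
      calc (R ^ (-n₁) - y ^ (-n₁)) / (-n₁) * |f y| ≤ y ^ (-n₁) / n₁ * |f y| :=
            mul_le_mul_of_nonneg_right h1 (abs_nonneg _)
        _ = (1/n₁) * y ^ (-n₁) * |f y| := by ring
    have e3 : (∫ η in Set.Ioc y R, η ^ (-n₁) * I η) ≤ B := by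
      apply MeasureTheory.setIntegral_mono_set hBint
      · filter_upwards [MeasureTheory.ae_restrict_mem measurableSet_Ioi] with x hx
        have hx0 : 0 < x := hy.trans hx
        exact mul_nonneg (Real.rpow_nonneg hx0.le _) (hI_pos x hx0).le
      · exact (Set.Ioc_subset_Ioi_self).eventuallyLE
    have e2 : (∫ η in Set.Ioc y R, η ^ (-n₁ - 1) * (f y - f η)) ≤
        (1/n₁) * ∫ η in Set.Ioc y R, η ^ (-n₁) * I η := by
      set F : ℝ → ℝ := fun η => -(1/n₁) * (η ^ (-n₁) * (f y - f η)) with hF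
      have hFd : ∀ η ∈ Set.uIcc y R, HasDerivAt F
          (η ^ (-n₁ - 1) * (f y - f η) + -(1/n₁) * (η ^ (-n₁) * I η)) η := by
        intro η hη
        rw [Set.uIcc_of_le hR] at hη
        have hη0 : 0 < η := lt_of_lt_of_le hy hη.1
        have h1 : HasDerivAt (fun x : ℝ => x ^ (-n₁)) (-n₁ * η ^ (-n₁ - 1)) η :=
          Real.hasDerivAt_rpow_const (Or.inl (ne_of_gt hη0))
        have h2 : HasDerivAt (fun x => f y - f x) (-(-(I η))) η := (hfderiv η hη0).const_sub _
        have h3 := (h1.mul h2).const_mul (-(1/n₁))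
        have hn₁ne : n₁ ≠ 0 := ne_of_gt hn₁0
        refine h3.congr_deriv ?_
        field_simp
        ring
      have hFint : IntervalIntegrable (fun η : ℝ => η ^ (-n₁ - 1) * (f y - f η) +
          -(1/n₁) * (η ^ (-n₁) * I η)) MeasureTheory.volume y R := by
        apply ContinuousOn.intervalIntegrable
        rw [Set.uIcc_of_le hR]
        exact hc2.add (continuousOn_const.mul hc3)
      have hFTC := intervalIntegral.integral_eq_sub_of_hasDerivAt hFd hFint
      have hsplit : (∫ η in y..R, (η ^ (-n₁ - 1) * (f y - f η) +
            -(1/n₁) * (η ^ (-n₁) * I η))) =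
          (∫ η in y..R, η ^ (-n₁ - 1) * (f y - f η)) +
          -(1/n₁) * ∫ η in y..R, η ^ (-n₁) * I η := by
        rw [intervalIntegral.integral_add, intervalIntegral.integral_const_mul]
        · apply ContinuousOn.intervalIntegrable; rwa [Set.uIcc_of_le hR]
        · apply ContinuousOn.intervalIntegrable
          rw [Set.uIcc_of_le hR]
          exact continuousOn_const.mul hc3
      have hFy : F y = 0 := by simp [hF]
      have hFR : F R ≤ 0 := by
        have hfyR : 0 ≤ f y - f R := by linarith [hfanti y R hy hR]
        have : 0 ≤ (1/n₁) * (R ^ (-n₁) * (f y - f R)) := by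
          apply mul_nonneg (by positivity)
          exact mul_nonneg (Real.rpow_nonneg (hy.trans_le hR).le _) hfyR
        simp only [hF]; linarith
      rw [hsplit, hFy] at hFTC
      have key : (∫ η in y..R, η ^ (-n₁ - 1) * (f y - f η)) ≤
          (1/n₁) * ∫ η in y..R, η ^ (-n₁) * I η := by linarith
      rwa [intervalIntegral.integral_of_le hR, intervalIntegral.integral_of_le hR] at key
    have e2' : (1/n₁) * (∫ η in Set.Ioc y R, η ^ (-n₁) * I η) ≤ (1/n₁) * B :=
      mul_le_mul_of_nonneg_left e3 (by positivity)
    calc (∫ η in Set.Ioc y R, η ^ (-n₁ - 1) * |u (I η)|) ≤ _ := step1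
      _ = _ := step2
      _ ≤ (1/n₁) * y ^ (-n₁) * |f y| + ((1/n₁) * B) + B := by
          have := e2.trans e2'
          linarith
      _ = (1/n₁) * y ^ (-n₁) * |f y| + (1 + 1/n₁) * B := by ring
  -- sequences
  set a : ℕ → ℝ := fun k => y / (k + 2) with ha
  have ha_pos : ∀ k, 0 < a k := by
    intro k; apply div_pos hy; positivity
  have ha_lt : ∀ k, a k < y := by
    intro k
    rw [ha, div_lt_iff₀ (by positivity)]
    nlinarith [Nat.cast_nonneg (α := ℝ) k]
  have ha_t : Filter.Tendsto a Filter.atTop (nhds 0) := by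
    apply Filter.Tendsto.div_atTop tendsto_const_nhds
    exact Filter.tendsto_atTop_add_const_right _ 2 tendsto_natCast_atTop_atTop
  set b : ℕ → ℝ := fun k => y + k with hb'
  have hb_ge : ∀ k, y ≤ b k := fun k => le_add_of_nonneg_right (Nat.cast_nonneg k)
  have hb_t : Filter.Tendsto b Filter.atTop Filter.atTop :=
    Filter.tendsto_atTop_add_const_left _ y tendsto_natCast_atTop_atTop
  -- norm = value on positive sets
  have hnorm₂ : ∀ k, (∫ η in Set.Ioc (a k) y, ‖η ^ (-n₂ - 1) * |u (I η)|‖) =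
      ∫ η in Set.Ioc (a k) y, η ^ (-n₂ - 1) * |u (I η)| := by
    intro k
    apply MeasureTheory.setIntegral_congr_fun measurableSet_Ioc
    intro x hx
    have hx0 : 0 < x := (ha_pos k).trans hx.1
    have hnn : (0:ℝ) ≤ x ^ (-n₂ - 1) * |u (I x)| := by positivity
    show ‖x ^ (-n₂ - 1) * |u (I x)|‖ = x ^ (-n₂ - 1) * |u (I x)|
    rw [Real.norm_eq_abs, abs_of_nonneg hnn]
  have hnorm₁ : ∀ k, (∫ η in Set.Ioc y (b k), ‖η ^ (-n₁ - 1) * |u (I η)|‖) =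
      ∫ η in Set.Ioc y (b k), η ^ (-n₁ - 1) * |u (I η)| := by
    intro k
    apply MeasureTheory.setIntegral_congr_fun measurableSet_Ioc
    intro x hx
    have hx0 : 0 < x := hy.trans hx.1
    have hnn : (0:ℝ) ≤ x ^ (-n₁ - 1) * |u (I x)| := by positivity
    show ‖x ^ (-n₁ - 1) * |u (I x)|‖ = x ^ (-n₁ - 1) * |u (I x)|
    rw [Real.norm_eq_abs, abs_of_nonneg hnn]
  -- left integrability
  have hint₂ : MeasureTheory.IntegrableOn (fun η => η ^ (-n₂ - 1) * |u (I η)|)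
      (Set.Ioc 0 y) := by
    apply MeasureTheory.integrableOn_Ioc_of_intervalIntegral_norm_bounded_left
      (fun k => hloc _ (a k) y (ha_pos k)) ha_t
    apply Filter.Eventually.of_forall
    intro k
    rw [hnorm₂ k]
    exact hbound₂ (a k) (ha_pos k) (ha_lt k)
  -- right integrability
  have hint₁ : MeasureTheory.IntegrableOn (fun η => η ^ (-n₁ - 1) * |u (I η)|)
      (Set.Ioi y) := by
    apply MeasureTheory.integrableOn_Ioi_of_intervalIntegral_norm_bounded
      ((1 / n₁) * y ^ (-n₁) * |f y| + (1 + 1/n₁) * B) y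
      (fun k => hloc _ y (b k) hy) hb_t
    apply Filter.Eventually.of_forall
    intro k
    rw [intervalIntegral.integral_of_le (hb_ge k), hnorm₁ k]
    exact hbound₁ (b k) (hb_ge k)
  -- left integral value bound
  have hval₂ : (∫ η in Set.Ioo 0 y, η ^ (-n₂ - 1) * |u (I η)|) ≤
      -(1 / n₂) * y ^ (-n₂) * |f y| + (1 - 1/n₂) * A := by
    rw [← MeasureTheory.integral_Ioc_eq_integral_Ioo]
    have hmono : Monotone (fun k => Set.Ioc (a k) y) := by
      intro k l hkl
      apply Set.Ioc_subset_Ioc_left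
      rw [ha]
      apply div_le_div_of_nonneg_left (le_of_lt hy) (by positivity)
      have : (k:ℝ) ≤ l := Nat.cast_le.mpr hkl
      linarith
    have hUnion : (⋃ k, Set.Ioc (a k) y) = Set.Ioc 0 y := by
      apply Set.Subset.antisymm
      · exact Set.iUnion_subset fun k => Set.Ioc_subset_Ioc_left (le_of_lt (ha_pos k))
      · intro x hx
        obtain ⟨k, hk⟩ := (ha_t.eventually_lt_const hx.1).exists
        exact Set.mem_iUnion.mpr ⟨k, hk, hx.2⟩
    have htend := MeasureTheory.tendsto_setIntegral_of_monotone
      (fun k => measurableSet_Ioc) hmono (hUnion ▸ hint₂)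
    rw [hUnion] at htend
    exact le_of_tendsto htend (Filter.Eventually.of_forall fun k =>
      hbound₂ (a k) (ha_pos k) (ha_lt k))
  -- right integral value bound
  have hval₁ : (∫ η in Set.Ioi y, η ^ (-n₁ - 1) * |u (I η)|) ≤
      (1 / n₁) * y ^ (-n₁) * |f y| + (1 + 1/n₁) * B := by
    have htend := MeasureTheory.intervalIntegral_tendsto_integral_Ioi y hint₁ hb_t
    apply le_of_tendsto htend
    apply Filter.Eventually.of_forall
    intro k
    rw [intervalIntegral.integral_of_le (hb_ge k)]
    exact hbound₁ (b k) (hb_ge k)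
  refine ⟨hint₂.mono_set Set.Ioo_subset_Ioc_self, hint₁, ?_⟩
  have hfy : |u (I y) - y * I y| = |f y| := rfl
  rw [hfy]
  linarith [hval₁, hval₂]
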